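/- Let k ≥ 1 be an integer and ε ∈ {1, −1}. Let p be a prime not dividing 2k+1, let n be an odd positive integer such that 2 is not a square in ℤ/pℤ, and suppose that for some (equivalently, any) primitive (2k+1)-th root of unity ζ in an algebraic closure of 𝔽_{p^n}, the element ζ^{i} + ζ^{−i} does not lie in (the image of) 𝔽_{p^n} for every 1 ≤ i ≤ k. Then the map PSL₂(𝔽_{p^n}) × PSL₂(𝔽_{p^n}) → PSL₂(𝔽_{p^n}) given by (x, y) ↦ x² · (x²·y·x^{2ε}·y⁻¹)^{k} is not surjective. -/
import Mathlib

open scoped MatrixGroups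

/-- Chebyshev-like sequence: `cheb b 0 = 0`, `cheb b 1 = 1`,
`cheb b (j+2) = b * cheb b (j+1) - cheb b j`. -/
def chebAux {F : Type*} [Field F] (b : F) : ℕ → F
  | 0 => 0
  | 1 => 1
  | (j+2) => b * chebAux b (j+1) - chebAux b j

lemma chebAux_map {F K : Type*} [Field F] [Field K] (φ : F →+* K) (b : F) :
    ∀ j, φ (chebAux b j) = chebAux (φ b) j := by
  intro j
  induction j using Nat.strong_induction_on with
  | _ j ih =>
    match j with
    | 0 => simp [chebAux]
    | 1 => simp [chebAux]
    | (j+2) =>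
      simp only [chebAux, map_sub, map_mul, ih (j+1) (by omega), ih j (by omega)]

lemma chebAux_two {F : Type*} [Field F] : ∀ j, chebAux (2 : F) j = j := by
  intro j
  induction j using Nat.strong_induction_on with
  | _ j ih =>
    match j with
    | 0 => simp [chebAux]
    | 1 => simp [chebAux]
    | (j+2) =>
      simp only [chebAux, ih (j+1) (by omega), ih j (by omega)]
      push_cast; ring

lemma chebAux_neg_two {F : Type*} [Field F] :
    ∀ j, chebAux (-2 : F) j = (-1) ^ (j+1) * j := by
  intro j
  induction j using Nat.strong_induction_on with
  | _ j ih =>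
    match j with
    | 0 => simp [chebAux]
    | 1 => simp [chebAux]
    | (j+2) =>
      simp only [chebAux, ih (j+1) (by omega), ih j (by omega)]
      push_cast; ring

lemma chebAux_lambda {F : Type*} [Field F] {b lam : F} (h : lam ^ 2 - b * lam + 1 = 0) :
    ∀ j, chebAux b j * (lam ^ 2 - 1) * lam ^ j = lam ^ (2 * j + 1) - lam := by
  intro j
  induction j using Nat.strong_induction_on with
  | _ j ih =>
    match j with
    | 0 => simp [chebAux]
    | 1 => simp [chebAux]; ring
    | (j+2) =>
      have h1 := ih (j+1) (by omega)
      have h2 := ih j (by omega)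
      simp only [chebAux]
      have e1 : 2 * (j + 2) + 1 = (2 * (j+1) + 1) + 2 := by ring
      rw [e1]
      linear_combination b * lam * h1 - lam^2 * h2 - (lam ^ (2*(j+1)+1) - lam) * h

open Polynomial in
lemma chebAux_root_form {K : Type*} [Field K] [IsAlgClosed K] {p : ℕ} [Fact p.Prime] [CharP K p]
    {k : ℕ} (hk : 1 ≤ k) (hp : ¬ p ∣ 2 * k + 1) {ζ : K} (hζ : IsPrimitiveRoot ζ (2 * k + 1))
    {b : K} (hb : chebAux b k * (b - 1) - chebAux b (k - 1) = 0) :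
    ∃ i ∈ Finset.Icc 1 k, -b = ζ ^ (i : ℤ) + ζ ^ (-(i : ℤ)) := by
  obtain ⟨m, rfl⟩ : ∃ m, k = m + 1 := ⟨k - 1, by omega⟩
  simp only [Nat.add_sub_cancel] at hb
  -- find a root of the characteristic quadratic
  obtain ⟨lam, hlam⟩ := IsAlgClosed.exists_root (C 1 * X ^ 2 + C (-b) * X + C 1)
    (by rw [Polynomial.degree_quadratic one_ne_zero]; exact two_ne_zero)
  have hquad : lam ^ 2 - b * lam + 1 = 0 := by
    have := hlam
    simp only [IsRoot, eval_add, eval_mul, eval_pow, eval_C, eval_X] at this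
    linear_combination this
  have hlam0 : lam ≠ 0 := by
    intro h; rw [h] at hquad; simp at hquad
  by_cases hsq : lam ^ 2 = 1
  · -- degenerate cases lam = ±1
    have hfac : (lam - 1) * (lam + 1) = 0 := by linear_combination hsq
    rcases mul_eq_zero.mp hfac with h1 | h1
    · -- lam = 1, so b = 2 and the recursion gives 1 = 0
      have hlam1 : lam = 1 := by linear_combination h1
      have hb2 : b = 2 := by rw [hlam1] at hquad; linear_combination -hquad
      rw [hb2, chebAux_two, chebAux_two] at hb
      exfalso
      apply one_ne_zero (α := K)
      push_cast at hb
      linear_combination hb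
    · -- lam = -1, so b = -2 and the recursion gives 2k+1 = 0
      have hlam1 : lam = -1 := by linear_combination h1
      have hb2 : b = -2 := by rw [hlam1] at hquad; linear_combination hquad
      rw [hb2, chebAux_neg_two, chebAux_neg_two] at hb
      exfalso
      have h5 : ((-1 : K) ^ m) * (-((2 * m + 3 : ℕ) : K)) = 0 := by
        push_cast at hb ⊢
        linear_combination hb
      have h6 : ((2 * m + 3 : ℕ) : K) = 0 := by
        rcases mul_eq_zero.mp h5 with h | h
        · exact absurd h (pow_ne_zero _ (neg_ne_zero.mpr one_ne_zero))
        · exact neg_eq_zero.mp h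
      have := (CharP.cast_eq_zero_iff K p (2 * m + 3)).mp h6
      exact hp (by rw [show 2 * (m + 1) + 1 = 2 * m + 3 from by omega]; exact this)
  · -- main case: lam is not ±1
    have hlam1 : lam - 1 ≠ 0 := fun h => hsq (by rw [sub_eq_zero.mp h]; ring)
    have hlamn1 : lam + 1 ≠ 0 := fun h => hsq (by
      have : lam = -1 := by linear_combination h
      rw [this]; ring)
    have h1 := chebAux_lambda hquad (m + 1)
    have h2 := chebAux_lambda hquad m
    have hE : (b - 1) * lam * (lam ^ (2 * m + 3) - lam) - lam ^ 2 * (lam ^ (2 * m + 1) - lam) = 0 := by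
      have e1 : 2 * (m + 1) + 1 = 2 * m + 3 := by ring
      rw [e1] at h1
      linear_combination (lam ^ 2 - 1) * lam ^ (m + 2) * hb - (b - 1) * lam * h1 + lam ^ 2 * h2
    have hF : lam * (lam - 1) * (lam ^ (2 * m + 3) + 1) = 0 := by
      linear_combination hE + (lam ^ (2 * m + 3) - lam) * hquad
    have hpow : lam ^ (2 * (m + 1) + 1) = -1 := by
      have e1 : 2 * (m + 1) + 1 = 2 * m + 3 := by ring
      rw [e1]
      rcases mul_eq_zero.mp hF with h | h
      · rcases mul_eq_zero.mp h with h' | h'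
        · exact absurd h' hlam0
        · exact absurd h' hlam1
      · linear_combination h
    -- mu = -lam is a nontrivial (2k+1)-st root of unity
    set mu := -lam with hmu
    have hmupow : mu ^ (2 * (m + 1) + 1) = 1 := by
      rw [hmu, Odd.neg_pow ⟨m + 1, by ring⟩, hpow]; ring
    have hmu1 : mu ≠ 1 := by
      intro h
      apply hlamn1
      rw [hmu] at h
      linear_combination -h
    haveI : NeZero (2 * (m + 1) + 1) := ⟨by omega⟩
    obtain ⟨j, hjlt, hjeq⟩ := hζ.eq_pow_of_pow_eq_one hmupow
    have hj0 : j ≠ 0 := by rintro rfl; rw [pow_zero] at hjeq; exact hmu1 hjeq.symm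
    have hmu0 : mu ≠ 0 := by rw [hmu]; exact neg_ne_zero.mpr hlam0
    have hzinv : ζ ^ (2 * (m + 1) + 1 - j) = mu⁻¹ := by
      have : ζ ^ j * ζ ^ (2 * (m + 1) + 1 - j) = 1 := by
        rw [← pow_add]
        have e : j + (2 * (m + 1) + 1 - j) = 2 * (m + 1) + 1 := by omega
        rw [e, hζ.pow_eq_one]
      rw [hjeq] at this
      field_simp
      linear_combination this
    have hbsum : -b = mu + mu⁻¹ := by
      have hlaminv : (-lam)⁻¹ = -lam⁻¹ := by
        field_simp
      have h8 : lam⁻¹ = b - lam := inv_eq_of_mul_eq_one_right (by linear_combination -hquad)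
      rw [hmu, hlaminv, h8]
      ring
    by_cases hjk : j ≤ m + 1
    · refine ⟨j, Finset.mem_Icc.mpr ⟨by omega, hjk⟩, ?_⟩
      rw [zpow_natCast, zpow_neg, zpow_natCast, hjeq, hbsum]
    · refine ⟨2 * (m + 1) + 1 - j, Finset.mem_Icc.mpr ⟨by omega, by omega⟩, ?_⟩
      rw [zpow_natCast, zpow_neg, zpow_natCast, hzinv, inv_inv, hbsum, add_comm]

lemma not_isSquare_two_galoisField (p : ℕ) [Fact p.Prime] (n : ℕ) (hn : 0 < n) (hodd : Odd n)
    (h2 : ¬ IsSquare (2 : ZMod p)) : ¬ IsSquare (2 : GaloisField p n) := by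
  haveI : Fintype (GaloisField p n) := Fintype.ofFinite _
  have hp2 : p ≠ 2 := by
    rintro rfl
    have : IsSquare (2 : ZMod 2) := ⟨0, show (2 : ZMod 2) = 0 * 0 by rfl⟩
    exact h2 this
  have hpodd : p % 2 = 1 := Nat.odd_iff.mp ((Fact.out : p.Prime).odd_of_ne_two hp2)
  have hmod : ¬ (p % 8 = 1 ∨ p % 8 = 7) := by
    rw [← ZMod.exists_sq_eq_two_iff hp2]
    exact h2
  have hcard : Fintype.card (GaloisField p n) = p ^ n := by
    rw [Fintype.card_eq_nat_card, GaloisField.card p n hn.ne']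
  rw [FiniteField.isSquare_two_iff, hcard]
  -- p^n ≡ p (mod 8) since n is odd and p² ≡ 1 (mod 8)
  obtain ⟨m, rfl⟩ := hodd
  have hsq8 : p ^ 2 % 8 = 1 := by
    obtain ⟨t, ht⟩ : ∃ t, p = 2 * t + 1 := ⟨p / 2, by omega⟩
    subst ht
    have : (2 * t + 1) ^ 2 = 4 * (t * (t + 1)) + 1 := by ring
    rw [this]
    have : 2 ∣ t * (t + 1) := Nat.even_mul_succ_self t |>.two_dvd
    omega
  have hpow : p ^ (2 * m + 1) % 8 = p % 8 := by
    have h1 : p ^ (2 * m + 1) = (p ^ 2) ^ m * p := by ring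
    rw [h1, Nat.mul_mod, Nat.pow_mod, hsq8, one_pow]
    simp [Nat.mod_mod_of_dvd]
  have hp8 : p % 8 < 8 := Nat.mod_lt _ (by norm_num)
  have hp8odd : p % 8 % 2 = 1 := by
    rw [Nat.mod_mod_of_dvd p (by norm_num : (2:ℕ) ∣ 8)]; exact hpodd
  omega


section SL2

variable {F : Type*} [Field F]

local notation:1024 "↑ₘ" A:1024 => ((A : Matrix.SpecialLinearGroup (Fin 2) F) : Matrix (Fin 2) (Fin 2) F)

lemma ch2 (A : Matrix (Fin 2) (Fin 2) F) (h : A.det = 1) :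
    A * A = A.trace • A - 1 := by
  rw [Matrix.det_fin_two] at h
  ext i j
  fin_cases i <;> fin_cases j <;>
    simp [Matrix.mul_apply, Fin.sum_univ_two, Matrix.trace_fin_two, Matrix.one_apply,
      smul_eq_mul] <;>
    first
      | linear_combination h
      | linear_combination -h
      | ring

lemma sl2_coe_inv (A : Matrix.SpecialLinearGroup (Fin 2) F) :
    ↑ₘ(A⁻¹) = (Matrix.trace ↑ₘA) • (1 : Matrix (Fin 2) (Fin 2) F) - ↑ₘA := by
  have hch := ch2 ↑ₘA A.prop
  have hinv : ↑ₘ(A⁻¹) * ↑ₘA = 1 := by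
    rw [← Matrix.SpecialLinearGroup.coe_mul, inv_mul_cancel, Matrix.SpecialLinearGroup.coe_one]
  have h1 : ↑ₘ(A⁻¹) * (↑ₘA * ↑ₘA) = ↑ₘA := by
    rw [← mul_assoc, hinv, one_mul]
  rw [hch] at h1
  rw [mul_sub, mul_smul_comm, hinv, mul_one] at h1
  set t := Matrix.trace ↑ₘA with ht
  rw [← h1]
  abel

lemma sl2_trace_inv (A : Matrix.SpecialLinearGroup (Fin 2) F) :
    Matrix.trace ↑ₘ(A⁻¹) = Matrix.trace ↑ₘA := by
  rw [sl2_coe_inv, Matrix.trace_sub, Matrix.trace_smul, Matrix.trace_one]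
  simp [smul_eq_mul]
  ring

lemma sl2_trace_conj (Y D : Matrix.SpecialLinearGroup (Fin 2) F) :
    Matrix.trace ↑ₘ(Y * D * Y⁻¹) = Matrix.trace ↑ₘD := by
  simp only [Matrix.SpecialLinearGroup.coe_mul]
  rw [Matrix.trace_mul_comm, ← mul_assoc, ← Matrix.SpecialLinearGroup.coe_mul, inv_mul_cancel,
    Matrix.SpecialLinearGroup.coe_one, one_mul]

lemma sl2_coe_pow_cheb (B : Matrix.SpecialLinearGroup (Fin 2) F) (j : ℕ) :
    ↑ₘ(B ^ (j+1))
      = chebAux (Matrix.trace ↑ₘB) (j+1) • ↑ₘB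
        - chebAux (Matrix.trace ↑ₘB) j • (1 : Matrix (Fin 2) (Fin 2) F) := by
  induction j with
  | zero => simp [chebAux]
  | succ j ih =>
    have hch := ch2 ↑ₘB B.prop
    rw [pow_succ, Matrix.SpecialLinearGroup.coe_mul, ih, sub_mul, smul_mul_assoc, smul_mul_assoc,
      one_mul, hch]
    simp only [chebAux, smul_sub, smul_smul, sub_smul]
    rw [mul_comm (Matrix.trace ↑ₘB) (chebAux (Matrix.trace ↑ₘB) (j+1))]
    abel

end SL2

/-- Finite-field form of Theorem 3.1: if `p ∤ 2k+1`, `n` is odd, `2` is not a square mod `p`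
and `ζⁱ + ζ⁻ⁱ ∉ 𝔽_{p^n}` for a primitive `(2k+1)`-th root of unity `ζ` in an algebraic closure
of `𝔽_{p^n}` and all `1 ≤ i ≤ k`, then `(x, y) ↦ x²·(x²·y·x^{2ε}·y⁻¹)^k` is not surjective on
`PSL₂(𝔽_{p^n})`. -/
theorem nonsurjective_word_map_psl2_finite_field
    (k : ℕ) (hk : 1 ≤ k) (ε : ℤ) (hε : ε = 1 ∨ ε = -1)
    (p : ℕ) [Fact p.Prime] (n : ℕ) (hn : 0 < n)
    (hp : ¬ (p ∣ 2 * k + 1))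
    (hodd : Odd n)
    (h2 : ¬ IsSquare (2 : ZMod p))
    (ζ : AlgebraicClosure (GaloisField p n))
    (hζ : IsPrimitiveRoot ζ (2 * k + 1))
    (hnot : ∀ i ∈ Finset.Icc 1 k, ∀ c : GaloisField p n,
      algebraMap (GaloisField p n) (AlgebraicClosure (GaloisField p n)) c
        ≠ ζ ^ (i : ℤ) + ζ ^ (-(i : ℤ))) :
    ¬ Function.Surjective
      (fun g : Matrix.ProjectiveSpecialLinearGroup (Fin 2) (GaloisField p n) ×
          Matrix.ProjectiveSpecialLinearGroup (Fin 2) (GaloisField p n) =>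
        g.1 ^ 2 * (g.1 ^ 2 * g.2 * g.1 ^ (2 * ε) * g.2⁻¹) ^ k) := by
  intro hsurj
  set F := GaloisField p n with hF
  let J : Matrix.SpecialLinearGroup (Fin 2) F :=
    ⟨!![0, 1; -1, 0], by simp [Matrix.det_fin_two_of]⟩
  obtain ⟨⟨x, y⟩, hxy⟩ := hsurj (QuotientGroup.mk J)
  obtain ⟨X, rfl⟩ := QuotientGroup.mk_surjective x
  obtain ⟨Y, rfl⟩ := QuotientGroup.mk_surjective y
  simp only at hxy
  set W : Matrix.SpecialLinearGroup (Fin 2) F :=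
    X ^ 2 * (X ^ 2 * Y * X ^ (2 * ε) * Y⁻¹) ^ k with hW
  have hxy' : (QuotientGroup.mk W : Matrix.ProjectiveSpecialLinearGroup (Fin 2) F)
      = QuotientGroup.mk J := by
    rw [hW]
    simpa only [QuotientGroup.mk_mul, QuotientGroup.mk_pow, QuotientGroup.mk_zpow,
      QuotientGroup.mk_inv] using hxy
  have hcen : W⁻¹ * J ∈ Subgroup.center (Matrix.SpecialLinearGroup (Fin 2) F) :=
    QuotientGroup.eq.mp hxy'
  obtain ⟨r, hr2, hrs⟩ := Matrix.SpecialLinearGroup.mem_center_iff.mp hcen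
  -- the target has trace zero, so `W` has trace zero
  have hJtr : Matrix.trace ((J : Matrix.SpecialLinearGroup (Fin 2) F) : Matrix (Fin 2) (Fin 2) F) = 0 := by
    simp [J, Matrix.trace_fin_two]
  have hJW : ((J : Matrix.SpecialLinearGroup (Fin 2) F) : Matrix (Fin 2) (Fin 2) F)
      = (W : Matrix (Fin 2) (Fin 2) F) * (r • 1) := by
    have h5 : W * (W⁻¹ * J) = J := by group
    have hscal : r • (1 : Matrix (Fin 2) (Fin 2) F) = (Matrix.scalar (Fin 2)) r := by
      ext i j
      simp [Matrix.scalar_apply, Matrix.one_apply, Matrix.diagonal_apply, mul_ite]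
    calc ((J : Matrix.SpecialLinearGroup (Fin 2) F) : Matrix (Fin 2) (Fin 2) F)
        = ((W * (W⁻¹ * J) : Matrix.SpecialLinearGroup (Fin 2) F) : Matrix (Fin 2) (Fin 2) F) := by
          rw [h5]
      _ = (W : Matrix (Fin 2) (Fin 2) F) * ((W⁻¹ * J : Matrix.SpecialLinearGroup (Fin 2) F) : Matrix (Fin 2) (Fin 2) F) :=
          Matrix.SpecialLinearGroup.coe_mul _ _
      _ = (W : Matrix (Fin 2) (Fin 2) F) * (r • 1) := by rw [hscal, hrs]
  have hr0 : r ≠ 0 := by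
    intro h
    rw [h] at hr2
    simp [Fintype.card_fin] at hr2
  have htrW : Matrix.trace ((W : Matrix.SpecialLinearGroup (Fin 2) F) : Matrix (Fin 2) (Fin 2) F) = 0 := by
    have := hJtr
    rw [hJW] at this
    rw [mul_smul_comm, mul_one, Matrix.trace_smul, smul_eq_mul] at this
    exact (mul_eq_zero.mp this).resolve_left hr0
  -- now set up the trace computation
  set A : Matrix.SpecialLinearGroup (Fin 2) F := X ^ 2 with hA
  set Cc : Matrix.SpecialLinearGroup (Fin 2) F := Y * X ^ (2 * ε) * Y⁻¹ with hCc
  set B : Matrix.SpecialLinearGroup (Fin 2) F := A * Cc with hB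
  have hWeq : W = A * B ^ k := by
    rw [hW, hB, hCc, hA]
    group
  set s : F := Matrix.trace ((X : Matrix.SpecialLinearGroup (Fin 2) F) : Matrix (Fin 2) (Fin 2) F) with hs
  set α : F := Matrix.trace ((A : Matrix.SpecialLinearGroup (Fin 2) F) : Matrix (Fin 2) (Fin 2) F) with hα
  set β : F := Matrix.trace ((B : Matrix.SpecialLinearGroup (Fin 2) F) : Matrix (Fin 2) (Fin 2) F) with hβ
  have hchX := ch2 ((X : Matrix.SpecialLinearGroup (Fin 2) F) : Matrix (Fin 2) (Fin 2) F) X.prop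
  have hAcoe : ((A : Matrix.SpecialLinearGroup (Fin 2) F) : Matrix (Fin 2) (Fin 2) F)
      = (X : Matrix (Fin 2) (Fin 2) F) * (X : Matrix (Fin 2) (Fin 2) F) := by
    rw [hA, pow_two, Matrix.SpecialLinearGroup.coe_mul]
  have hαs : α = s ^ 2 - 2 := by
    rw [hα, hAcoe, hchX, Matrix.trace_sub, Matrix.trace_smul, Matrix.trace_one, smul_eq_mul, ← hs]
    simp
    ring
  have htrXε : Matrix.trace ((X ^ (2 * ε) : Matrix.SpecialLinearGroup (Fin 2) F) : Matrix (Fin 2) (Fin 2) F) = α := by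
    rcases hε with h | h
    · rw [h, show (2 : ℤ) * 1 = ((2 : ℕ) : ℤ) by norm_num, zpow_natCast, ← hA, ← hα]
    · rw [h, show (2 : ℤ) * (-1) = -((2 : ℕ) : ℤ) by norm_num, zpow_neg, zpow_natCast, ← hA,
        sl2_trace_inv, ← hα]
  have htrC : Matrix.trace ((Cc : Matrix.SpecialLinearGroup (Fin 2) F) : Matrix (Fin 2) (Fin 2) F) = α := by
    rw [hCc, sl2_trace_conj]
    exact htrXε
  have hchA := ch2 ((A : Matrix.SpecialLinearGroup (Fin 2) F) : Matrix (Fin 2) (Fin 2) F) A.prop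
  have htrAB : Matrix.trace ((A : Matrix (Fin 2) (Fin 2) F) * (B : Matrix (Fin 2) (Fin 2) F)) = α * β - α := by
    calc Matrix.trace ((A : Matrix (Fin 2) (Fin 2) F) * (B : Matrix (Fin 2) (Fin 2) F))
        = Matrix.trace (((A : Matrix (Fin 2) (Fin 2) F) * (A : Matrix (Fin 2) (Fin 2) F)) * (Cc : Matrix (Fin 2) (Fin 2) F)) := by
          rw [hB, Matrix.SpecialLinearGroup.coe_mul, mul_assoc]
      _ = Matrix.trace ((α • (A : Matrix (Fin 2) (Fin 2) F) - 1) * (Cc : Matrix (Fin 2) (Fin 2) F)) := by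
          rw [hchA, ← hα]
      _ = α * Matrix.trace ((A : Matrix (Fin 2) (Fin 2) F) * (Cc : Matrix (Fin 2) (Fin 2) F))
            - Matrix.trace ((Cc : Matrix.SpecialLinearGroup (Fin 2) F) : Matrix (Fin 2) (Fin 2) F) := by
          rw [sub_mul, Matrix.smul_mul, one_mul, Matrix.trace_sub, Matrix.trace_smul, smul_eq_mul]
      _ = α * β - α := by
          rw [← Matrix.SpecialLinearGroup.coe_mul, ← hB, ← hβ, htrC]
  obtain ⟨m, rfl⟩ : ∃ m, k = m + 1 := ⟨k - 1, by omega⟩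
  have htrWval : chebAux β (m + 1) * (α * β - α) - chebAux β m * α = 0 := by
    have e : Matrix.trace ((W : Matrix.SpecialLinearGroup (Fin 2) F) : Matrix (Fin 2) (Fin 2) F)
        = chebAux β (m + 1) * (α * β - α) - chebAux β m * α := by
      rw [hWeq, Matrix.SpecialLinearGroup.coe_mul, sl2_coe_pow_cheb B m, ← hβ, mul_sub,
        mul_smul_comm, mul_smul_comm, mul_one, Matrix.trace_sub, Matrix.trace_smul,
        Matrix.trace_smul, smul_eq_mul, smul_eq_mul, htrAB, ← hα]
    rw [← e]
    exact htrW
  have hsplit : α * (chebAux β (m + 1) * (β - 1) - chebAux β m) = 0 := by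
    linear_combination htrWval
  rcases mul_eq_zero.mp hsplit with hz | hz
  · -- 2 would be a square in the field
    apply not_isSquare_two_galoisField p n hn hodd h2
    exact ⟨s, by linear_combination hαs - hz⟩
  · -- β is a zero of the Chebyshev-type polynomial, contradiction with hnot
    have hb : chebAux (algebraMap F (AlgebraicClosure F) β) (m + 1)
        * (algebraMap F (AlgebraicClosure F) β - 1)
        - chebAux (algebraMap F (AlgebraicClosure F) β) ((m + 1) - 1) = 0 := by
      simp only [Nat.add_sub_cancel]
      have h7 := congrArg (algebraMap F (AlgebraicClosure F)) hz
      rw [map_sub, map_mul, map_sub, map_one, chebAux_map, chebAux_map, map_zero] at h7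
      exact h7
    obtain ⟨i, hi, hival⟩ := chebAux_root_form (p := p) (by omega : 1 ≤ m + 1) hp hζ hb
    exact hnot i hi (-β) (by rw [map_neg]; exact hival)
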